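/- Let H be a complex Hilbert space and A a von Neumann algebra on H whose commutant C = A' is abelian. Fix ξ ∈ H and let E be the orthogonal projection onto the closure of {Bξ : B ∈ C}. Let X and Xʹ be bounded operators on H, each commuting with every element of C. Then the operators E∘X∘E and E∘Xʹ∘E commute: E X E Xʹ E = E Xʹ E X E. In particular, for every A ∈ A, E X E commutes with E A E. -/

import Mathlib

set_option maxHeartbeats 1000000

/-- The orthogonal projection of `H` onto the closure of the subspace spanned by `S`,
viewed as a bounded operator on `H`. -/
noncomputable def projCl {H : Type*} [NormedAddCommGroup H] [InnerProductSpace ℂ H]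
    [CompleteSpace H] (S : Set H) : H →L[ℂ] H :=
  haveI : CompleteSpace ((Submodule.span ℂ S).topologicalClosure) :=
    ((Submodule.span ℂ S).isClosed_topologicalClosure).completeSpace_coe
  ((Submodule.span ℂ S).topologicalClosure).subtypeL.comp
    (Submodule.orthogonalProjection ((Submodule.span ℂ S).topologicalClosure))

/-- The orthogonal projection `E` onto the closure of `{Bξ : B ∈ A'}`, where `A'` is the
commutant of the von Neumann algebra `A`. -/
noncomputable def cyclicProj {H : Type*} [NormedAddCommGroup H] [InnerProductSpace ℂ H]
    [CompleteSpace H] (A : VonNeumannAlgebra H) (ξ : H) : H →L[ℂ] H :=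
  projCl ((fun B : H →L[ℂ] H => B ξ) '' (A.commutant : Set (H →L[ℂ] H)))

namespace CyclicProjAux

open ContinuousLinearMap Submodule Filter Topology

variable {H : Type*} [NormedAddCommGroup H] [InnerProductSpace ℂ H] [CompleteSpace H]

local notation "⟪" x ", " y "⟫" => @inner ℂ _ _ x y

/-- The set `{Bξ : B ∈ A'}` as a subspace. -/
def Ssub (A : VonNeumannAlgebra H) (ξ : H) : Submodule ℂ H where
  carrier := (fun B : H →L[ℂ] H => B ξ) '' (A.commutant : Set (H →L[ℂ] H))
  add_mem' := by
    rintro _ _ ⟨B₁, h₁, rfl⟩ ⟨B₂, h₂, rfl⟩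
    exact ⟨B₁ + B₂, add_mem h₁ h₂, rfl⟩
  zero_mem' := ⟨0, zero_mem _, rfl⟩
  smul_mem' := by
    rintro c _ ⟨B, h, rfl⟩
    exact ⟨c • B, A.commutant.toStarSubalgebra.smul_mem h c, rfl⟩

lemma span_eq_Ssub (A : VonNeumannAlgebra H) (ξ : H) :
    Submodule.span ℂ ((fun B : H →L[ℂ] H => B ξ) '' (A.commutant : Set (H →L[ℂ] H)))
      = Ssub A ξ :=
  Submodule.span_eq (Ssub A ξ)

lemma M_coe (A : VonNeumannAlgebra H) (ξ : H) :
    (((Submodule.span ℂ ((fun B : H →L[ℂ] H => B ξ) ''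
        (A.commutant : Set (H →L[ℂ] H)))).topologicalClosure : Submodule ℂ H) : Set H)
      = closure ((Ssub A ξ : Submodule ℂ H) : Set H) := by
  rw [span_eq_Ssub]
  exact Submodule.topologicalClosure_coe _

lemma E_apply_mem (A : VonNeumannAlgebra H) (ξ : H) (x : H) :
    cyclicProj A ξ x ∈ closure ((Ssub A ξ : Submodule ℂ H) : Set H) := by
  rw [← M_coe]
  haveI : CompleteSpace ((Submodule.span ℂ ((fun B : H →L[ℂ] H => B ξ) ''
      (A.commutant : Set (H →L[ℂ] H)))).topologicalClosure) :=
    ((Submodule.span ℂ _).isClosed_topologicalClosure).completeSpace_coe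
  exact Submodule.starProjection_apply_mem _ x

lemma E_apply_of_mem (A : VonNeumannAlgebra H) (ξ : H) {x : H}
    (hx : x ∈ closure ((Ssub A ξ : Submodule ℂ H) : Set H)) : cyclicProj A ξ x = x := by
  haveI : CompleteSpace ((Submodule.span ℂ ((fun B : H →L[ℂ] H => B ξ) ''
      (A.commutant : Set (H →L[ℂ] H)))).topologicalClosure) :=
    ((Submodule.span ℂ _).isClosed_topologicalClosure).completeSpace_coe
  have hx' : x ∈ (Submodule.span ℂ ((fun B : H →L[ℂ] H => B ξ) ''
      (A.commutant : Set (H →L[ℂ] H)))).topologicalClosure := by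
    rw [← SetLike.mem_coe, M_coe]; exact hx
  exact Submodule.starProjection_eq_self_iff.mpr hx'

lemma E_sa (A : VonNeumannAlgebra H) (ξ : H) : star (cyclicProj A ξ) = cyclicProj A ξ := by
  haveI : CompleteSpace ((Submodule.span ℂ ((fun B : H →L[ℂ] H => B ξ) ''
      (A.commutant : Set (H →L[ℂ] H)))).topologicalClosure) :=
    ((Submodule.span ℂ _).isClosed_topologicalClosure).completeSpace_coe
  exact (isSelfAdjoint_starProjection _).star_eq

lemma E_idem (A : VonNeumannAlgebra H) (ξ : H) :
    cyclicProj A ξ * cyclicProj A ξ = cyclicProj A ξ := by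
  ext x
  exact E_apply_of_mem A ξ (E_apply_mem A ξ x)

lemma smul_mem_M (A : VonNeumannAlgebra H) (ξ : H) {B : H →L[ℂ] H} (hB : B ∈ A.commutant)
    {x : H} (hx : x ∈ closure ((Ssub A ξ : Submodule ℂ H) : Set H)) :
    B x ∈ closure ((Ssub A ξ : Submodule ℂ H) : Set H) := by
  refine map_mem_closure B.continuous hx ?_
  rintro _ ⟨D, hD, rfl⟩
  exact ⟨B * D, mul_mem hB hD, rfl⟩

lemma E_comm (A : VonNeumannAlgebra H) (ξ : H) {B : H →L[ℂ] H} (hB : B ∈ A.commutant) :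
    cyclicProj A ξ * B = B * cyclicProj A ξ := by
  set E := cyclicProj A ξ with hE
  have h1 : ∀ C : H →L[ℂ] H, C ∈ A.commutant → E * C * E = C * E := by
    intro C hC
    ext x
    show E (C (E x)) = C (E x)
    exact E_apply_of_mem A ξ (smul_mem_M A ξ hC (E_apply_mem A ξ x))
  have h2 := h1 (star B) (star_mem hB)
  have h3 := congrArg star h2
  simp only [star_mul, star_star, (E_sa A ξ : star E = E), ← hE] at h3
  -- h3 : E * (B * E) = E * B
  erw [E_sa A ξ] at h3
  rw [← mul_assoc] at h3
  exact h3.symm.trans (h1 B hB)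

lemma Eξ_eq (A : VonNeumannAlgebra H) (ξ : H) : cyclicProj A ξ ξ = ξ :=
  E_apply_of_mem A ξ (subset_closure ⟨1, one_mem _, one_apply_eq_self ξ⟩)

/-- Normality trick: if `T` is self-adjoint and commutes with `B`, `star B`, and
`B` is normal, then `‖(star B)ξ - Tξ‖ = ‖Bξ - Tξ‖`. -/
lemma norm_star_sub {B T : H →L[ℂ] H} (hBB : star B * B = B * star B)
    (h1 : T * B = B * T) (h2 : T * star B = star B * T) (hT : star T = T) (ξ : H) :
    ‖star B ξ - T ξ‖ = ‖B ξ - T ξ‖ := by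
  have key : star (star B - T) * (star B - T) = star (B - T) * (B - T) := by
    simp only [star_sub, star_star, hT, sub_mul, mul_sub]
    rw [hBB, h1, h2]
    abel
  have hv : ∀ u : H →L[ℂ] H, ((‖u ξ‖ : ℂ) ^ 2) = ⟪(star u * u) ξ, ξ⟫ := by
    intro u
    rw [mul_apply_eq_comp, star_eq_adjoint, adjoint_inner_left]
    exact (inner_self_eq_norm_sq_to_K (𝕜 := ℂ) (x := u ξ)).symm
  have h4 : ((‖(star B - T) ξ‖ : ℂ) ^ 2) = ((‖(B - T) ξ‖ : ℂ) ^ 2) := by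
    rw [hv, hv, key]
  have h5 : ‖(star B - T) ξ‖ ^ 2 = ‖(B - T) ξ‖ ^ 2 := by
    exact_mod_cast h4
  have h6 : ‖(star B - T) ξ‖ = ‖(B - T) ξ‖ := by
    nlinarith [norm_nonneg ((star B - T) ξ), norm_nonneg ((B - T) ξ)]
  simpa [sub_apply] using h6

lemma pointwise_comm {O P : H →L[ℂ] H} (h : O * P = P * O) (x : H) : O (P x) = P (O x) := by
  have := congrArg (fun f : H →L[ℂ] H => f x) h
  simpa [mul_apply] using this

/-- Abstract bilinear expansion step. -/
lemma expand (E P Q P' Q' : H →L[ℂ] H)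
    (k1 : E * P * E * P' * E = E * P' * E * P * E)
    (k2 : E * P * E * Q' * E = E * Q' * E * P * E)
    (k3 : E * Q * E * P' * E = E * P' * E * Q * E)
    (k4 : E * Q * E * Q' * E = E * Q' * E * Q * E) :
    E * (P + Complex.I • Q) * E * (P' + Complex.I • Q') * E =
      E * (P' + Complex.I • Q') * E * (P + Complex.I • Q) * E := by
  simp only [mul_add, add_mul, mul_smul_comm, smul_mul_assoc, smul_smul, smul_add]
  rw [k1, k2, k3, k4]
  abel

/-- The key step: for self-adjoint `Y, Y'` commuting with the abelian commutant. -/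
lemma key (A : VonNeumannAlgebra H)
    (habelian : ∀ b₁ ∈ A.commutant, ∀ b₂ ∈ A.commutant, b₁ * b₂ = b₂ * b₁)
    (ξ : H) {Y Y' : H →L[ℂ] H}
    (hY : ∀ B ∈ A.commutant, Y * B = B * Y) (hY' : ∀ B ∈ A.commutant, Y' * B = B * Y')
    (hYsa : star Y = Y) (hY'sa : star Y' = Y') :
    cyclicProj A ξ * Y * cyclicProj A ξ * Y' * cyclicProj A ξ =
      cyclicProj A ξ * Y' * cyclicProj A ξ * Y * cyclicProj A ξ := by
  set E := cyclicProj A ξ with hEdef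
  have hEsa : star E = E := E_sa A ξ
  have hEE : E * E = E := E_idem A ξ
  -- reduced operators
  set T := E * Y * E with hTdef
  set T' := E * Y' * E with hT'def
  have hTsa : star T = T := by
    rw [hTdef]; simp only [star_mul, hEsa, hYsa]; rw [mul_assoc]
  have hT'sa : star T' = T' := by
    rw [hT'def]; simp only [star_mul, hEsa, hY'sa]; rw [mul_assoc]
  have hcomm : ∀ Z : H →L[ℂ] H, (∀ B ∈ A.commutant, Z * B = B * Z) →
      ∀ B ∈ A.commutant, (E * Z * E) * B = B * (E * Z * E) := by
    intro Z hZ B hB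
    have hEB := E_comm A ξ hB
    rw [← hEdef] at hEB
    calc E * Z * E * B = E * Z * (E * B) := by rw [mul_assoc]
      _ = E * Z * (B * E) := by rw [hEB]
      _ = E * (Z * B) * E := by rw [← mul_assoc, mul_assoc E Z B]
      _ = E * (B * Z) * E := by rw [hZ B hB]
      _ = E * B * Z * E := by rw [← mul_assoc]
      _ = B * E * Z * E := by rw [hEB]
      _ = B * (E * Z * E) := by rw [mul_assoc B E Z, mul_assoc B (E * Z) E]
  have hTcomm : ∀ B ∈ A.commutant, T * B = B * T := hcomm Y hY
  have hT'comm : ∀ B ∈ A.commutant, T' * B = B * T' := hcomm Y' hY'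
  -- ranges in M
  have hTm : ∀ x : H, T x ∈ closure ((Ssub A ξ : Submodule ℂ H) : Set H) := by
    intro x
    have : T x = E (Y (E x)) := by simp [hTdef, mul_apply]
    rw [this]; exact E_apply_mem A ξ _
  have hT'm : ∀ x : H, T' x ∈ closure ((Ssub A ξ : Submodule ℂ H) : Set H) := by
    intro x
    have : T' x = E (Y' (E x)) := by simp [hT'def, mul_apply]
    rw [this]; exact E_apply_mem A ξ _
  -- Step 1: T T' ξ = T' T ξ
  have step1 : T (T' ξ) = T' (T ξ) := by
    obtain ⟨y, hy, hylim⟩ := mem_closure_iff_seq_limit.mp (hT'm ξ)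
    have hy' : ∀ n, ∃ B : H →L[ℂ] H, B ∈ A.commutant ∧ B ξ = y n := fun n => hy n
    choose b hbmem hbval using hy'
    have hblim : Filter.Tendsto (fun n => b n ξ) atTop (𝓝 (T' ξ)) := by
      simpa only [hbval] using hylim
    -- star approximation
    have hbstar : Filter.Tendsto (fun n => star (b n) ξ) atTop (𝓝 (T' ξ)) := by
      rw [tendsto_iff_norm_sub_tendsto_zero] at hblim ⊢
      have heq : ∀ n, ‖star (b n) ξ - T' ξ‖ = ‖b n ξ - T' ξ‖ := by
        intro n
        exact norm_star_sub (habelian _ (star_mem (hbmem n)) _ (hbmem n))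
          (hT'comm _ (hbmem n)) (hT'comm _ (star_mem (hbmem n))) hT'sa ξ
      simpa only [heq] using hblim
    -- inner products against the dense set agree
    have hinner : ∀ D : H →L[ℂ] H, D ∈ A.commutant → ⟪T (T' ξ), D ξ⟫ = ⟪T' (T ξ), D ξ⟫ := by
      intro D hD
      have lim1 : Filter.Tendsto (fun n => ⟪T (b n ξ), D ξ⟫) atTop (𝓝 ⟪T (T' ξ), D ξ⟫) :=
        ((T.continuous.tendsto _).comp hblim).inner tendsto_const_nhds
      have heq : ∀ n, ⟪T (b n ξ), D ξ⟫ = ⟪T ξ, D (star (b n) ξ)⟫ := by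
        intro n
        calc ⟪T (b n ξ), D ξ⟫
            = ⟪(b n) (T ξ), D ξ⟫ := by rw [pointwise_comm (hTcomm _ (hbmem n)) ξ]
          _ = ⟪T ξ, adjoint (b n) (D ξ)⟫ := (adjoint_inner_right (b n) (T ξ) (D ξ)).symm
          _ = ⟪T ξ, star (b n) (D ξ)⟫ := by rw [star_eq_adjoint]
          _ = ⟪T ξ, D (star (b n) ξ)⟫ := by
              rw [pointwise_comm (habelian _ (star_mem (hbmem n)) _ hD) ξ]
      have lim2 : Filter.Tendsto (fun n => ⟪T (b n ξ), D ξ⟫) atTop (𝓝 ⟪T ξ, D (T' ξ)⟫) := by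
        simp only [heq]
        exact tendsto_const_nhds.inner ((D.continuous.tendsto _).comp hbstar)
      have huniq := tendsto_nhds_unique lim1 lim2
      calc ⟪T (T' ξ), D ξ⟫
          = ⟪T ξ, D (T' ξ)⟫ := huniq
        _ = ⟪T ξ, T' (D ξ)⟫ := by rw [← pointwise_comm (hT'comm _ hD) ξ]
        _ = ⟪T ξ, adjoint T' (D ξ)⟫ := by rw [← star_eq_adjoint, hT'sa]
        _ = ⟪T' (T ξ), D ξ⟫ := adjoint_inner_right T' (T ξ) (D ξ)
    -- density
    have hzero : ∀ z ∈ closure ((Ssub A ξ : Submodule ℂ H) : Set H),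
        ⟪T (T' ξ) - T' (T ξ), z⟫ = 0 := by
      intro z hz
      have hcl : IsClosed {z : H | ⟪T (T' ξ) - T' (T ξ), z⟫ = 0} :=
        isClosed_eq (Continuous.inner continuous_const continuous_id) continuous_const
      refine closure_minimal ?_ hcl hz
      rintro _ ⟨D, hD, rfl⟩
      show ⟪T (T' ξ) - T' (T ξ), D ξ⟫ = 0
      rw [inner_sub_left, hinner D hD, sub_self]
    have hmem : T (T' ξ) - T' (T ξ) ∈ closure ((Ssub A ξ : Submodule ℂ H) : Set H) := by
      rw [← Submodule.topologicalClosure_coe, SetLike.mem_coe]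
      exact sub_mem (by rw [← SetLike.mem_coe, Submodule.topologicalClosure_coe]; exact hTm _)
        (by rw [← SetLike.mem_coe, Submodule.topologicalClosure_coe]; exact hT'm _)
    have := hzero _ hmem
    rw [inner_self_eq_zero] at this
    exact sub_eq_zero.mp this
  -- Step 2: operator equality on M, then compose with E
  have step2 : T * T' * E = T' * T * E := by
    ext x
    show T (T' (E x)) = T' (T (E x))
    have hx := E_apply_mem A ξ x
    have hclosed : IsClosed {z : H | T (T' z) = T' (T z)} :=
      isClosed_eq (T.continuous.comp T'.continuous) (T'.continuous.comp T.continuous)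
    refine closure_minimal ?_ hclosed hx
    rintro _ ⟨D, hD, rfl⟩
    show T (T' (D ξ)) = T' (T (D ξ))
    rw [pointwise_comm (hT'comm _ hD) ξ, pointwise_comm (hTcomm _ hD) (T' ξ), step1,
      pointwise_comm (hTcomm _ hD) ξ, pointwise_comm (hT'comm _ hD) (T ξ)]
  -- rewrite to the stated form
  have hL : T * T' * E = E * Y * E * Y' * E := by
    rw [hTdef, hT'def]
    calc E * Y * E * (E * Y' * E) * E
        = E * Y * (E * E) * Y' * (E * E) := by
          simp only [mul_assoc]
      _ = E * Y * E * Y' * E := by rw [hEE]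
  have hR : T' * T * E = E * Y' * E * Y * E := by
    rw [hTdef, hT'def]
    calc E * Y' * E * (E * Y * E) * E
        = E * Y' * (E * E) * Y * (E * E) := by
          simp only [mul_assoc]
      _ = E * Y' * E * Y * E := by rw [hEE]
  rw [← hL, ← hR, step2]

end CyclicProjAux

open CyclicProjAux in
/-- (Reduced-commutativity step in the proof of Theorem 3.) -/
theorem cyclicProj_reduced_operators_commute
    {H : Type*} [NormedAddCommGroup H] [InnerProductSpace ℂ H] [CompleteSpace H]
    (A : VonNeumannAlgebra H)
    (habelian : ∀ b₁ ∈ A.commutant, ∀ b₂ ∈ A.commutant, b₁ * b₂ = b₂ * b₁)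
    (ξ : H) (X X' : H →L[ℂ] H)
    (hX : ∀ B ∈ A.commutant, X * B = B * X)
    (hX' : ∀ B ∈ A.commutant, X' * B = B * X') :
    (cyclicProj A ξ * X * cyclicProj A ξ * X' * cyclicProj A ξ =
        cyclicProj A ξ * X' * cyclicProj A ξ * X * cyclicProj A ξ) ∧
      ∀ a ∈ A,
        (cyclicProj A ξ * X * cyclicProj A ξ) * (cyclicProj A ξ * a * cyclicProj A ξ) =
          (cyclicProj A ξ * a * cyclicProj A ξ) * (cyclicProj A ξ * X * cyclicProj A ξ) := by
  set E := cyclicProj A ξ with hEdef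
  have hEE : E * E = E := E_idem A ξ
  -- star of a commuting operator commutes
  have hstar : ∀ Z : H →L[ℂ] H, (∀ B ∈ A.commutant, Z * B = B * Z) →
      ∀ B ∈ A.commutant, star Z * B = B * star Z := by
    intro Z hZ B hB
    have := congrArg star (hZ (star B) (star_mem hB))
    simpa [star_mul, star_star] using this.symm
  -- general form of the key lemma, for arbitrary commuting X X'
  have main : ∀ Z Z' : H →L[ℂ] H, (∀ B ∈ A.commutant, Z * B = B * Z) →
      (∀ B ∈ A.commutant, Z' * B = B * Z') →
      E * Z * E * Z' * E = E * Z' * E * Z * E := by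
    intro Z Z' hZ hZ'
    have hsa : ∀ W : H →L[ℂ] H, star ((2 : ℂ)⁻¹ • (W + star W)) = (2 : ℂ)⁻¹ • (W + star W) := by
      intro W
      simp [star_smul, star_add, star_star, add_comm]
    have hsa' : ∀ W : H →L[ℂ] H, star ((Complex.I * (2 : ℂ)⁻¹) • (star W - W))
        = (Complex.I * (2 : ℂ)⁻¹) • (star W - W) := by
      intro W
      rw [star_smul, star_sub, star_star]
      rw [show star (Complex.I * (2 : ℂ)⁻¹) = -(Complex.I * (2 : ℂ)⁻¹) by
        simp [Complex.ext_iff]]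
      rw [neg_smul, ← smul_neg, neg_sub]
    have hdecomp : ∀ W : H →L[ℂ] H,
        (2 : ℂ)⁻¹ • (W + star W) + Complex.I • ((Complex.I * (2 : ℂ)⁻¹) • (star W - W)) = W := by
      intro W
      have hI : Complex.I * (Complex.I * (2 : ℂ)⁻¹) = -(2 : ℂ)⁻¹ := by
        rw [← mul_assoc, Complex.I_mul_I]; ring
      rw [smul_smul, hI, neg_smul, ← smul_neg, neg_sub, smul_add, smul_sub]
      have habel : ∀ a b : H →L[ℂ] H, a + b + (a - b) = a + a := fun a b => by abel
      rw [habel, ← add_smul]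
      norm_num
    have hcommP : ∀ (W : H →L[ℂ] H), (∀ B ∈ A.commutant, W * B = B * W) →
        ∀ B ∈ A.commutant, ((2 : ℂ)⁻¹ • (W + star W)) * B = B * ((2 : ℂ)⁻¹ • (W + star W)) := by
      intro W hW B hB
      rw [smul_mul_assoc, mul_smul_comm, add_mul, mul_add, hW B hB, hstar W hW B hB]
    have hcommQ : ∀ (W : H →L[ℂ] H), (∀ B ∈ A.commutant, W * B = B * W) →
        ∀ B ∈ A.commutant, ((Complex.I * (2 : ℂ)⁻¹) • (star W - W)) * B
          = B * ((Complex.I * (2 : ℂ)⁻¹) • (star W - W)) := by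
      intro W hW B hB
      rw [smul_mul_assoc, mul_smul_comm, sub_mul, mul_sub, hW B hB, hstar W hW B hB]
    have k1 := key A habelian ξ (hcommP Z hZ) (hcommP Z' hZ') (hsa Z) (hsa Z')
    have k2 := key A habelian ξ (hcommP Z hZ) (hcommQ Z' hZ') (hsa Z) (hsa' Z')
    have k3 := key A habelian ξ (hcommQ Z hZ) (hcommP Z' hZ') (hsa' Z) (hsa Z')
    have k4 := key A habelian ξ (hcommQ Z hZ) (hcommQ Z' hZ') (hsa' Z) (hsa' Z')
    rw [← hEdef] at k1 k2 k3 k4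
    have hexp := expand E ((2 : ℂ)⁻¹ • (Z + star Z)) ((Complex.I * (2 : ℂ)⁻¹) • (star Z - Z))
      ((2 : ℂ)⁻¹ • (Z' + star Z')) ((Complex.I * (2 : ℂ)⁻¹) • (star Z' - Z')) k1 k2 k3 k4
    rw [hdecomp Z, hdecomp Z'] at hexp
    exact hexp
  have part1 := main X X' hX hX'
  refine ⟨part1, ?_⟩
  intro a ha
  have hXa : ∀ B ∈ A.commutant, (a : H →L[ℂ] H) * B = B * a := by
    intro B hB
    exact VonNeumannAlgebra.mem_commutant_iff.mp hB a ha
  have h := main X a hX hXa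
  have hEE2 : ∀ W : H →L[ℂ] H, E * (E * W) = E * W := by
    intro W; rw [← mul_assoc, hEE]
  calc (E * X * E) * (E * a * E)
      = E * (X * (E * (E * (a * E)))) := by simp only [mul_assoc]
    _ = E * (X * (E * (a * E))) := by rw [hEE2]
    _ = E * (a * (E * (X * E))) := by
        have h' := h
        simp only [mul_assoc] at h'
        exact h'
    _ = E * (a * (E * (E * (X * E)))) := by rw [hEE2]
    _ = (E * a * E) * (E * X * E) := by simp only [mul_assoc]
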